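/- Let φ : ℝ^d → ℝ be differentiable and satisfy, for constants 0 < m ≤ M and all u, v ∈ ℝ^d: ⟨∇φ(u) − ∇φ(v), u − v⟩ ≥ m ‖u − v‖² and ‖∇φ(u) − ∇φ(v)‖ ≤ M ‖u − v‖. Let g : ℝ^d → ℝ^d satisfy ‖g(x) − ∇φ(x)‖ ≤ ε_g for all x, with ε_g > 0. Fix c₃ > 0, x ∈ ℝ^d and s ∈ ℝ^d with s ≠ 0, let y = g(x + s) − g(x), and suppose ⟨s, y⟩ ≥ 2(1 + c₃) ε_g ‖s‖. Then ⟨s, y⟩ / ⟨s, s⟩ ≥ ((1 + c₃)/(2 + c₃)) m and ⟨y, y⟩ / ⟨s, y⟩ ≤ (1 + 1/c₃) M. -/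

import Mathlib

variable {E : Type*} [NormedAddCommGroup E] [InnerProductSpace ℝ E] [CompleteSpace E]

lemma line_hasDerivAt (φ : E → ℝ) (hφ : Differentiable ℝ φ) (a w : E) (t : ℝ) :
    HasDerivAt (fun t : ℝ => φ (a + t • w)) (inner ℝ (gradient φ (a + t • w)) w : ℝ) t := by
  have h1 : HasDerivAt (fun t : ℝ => a + t • w) w t := by
    simpa using ((hasDerivAt_id t).smul_const w).const_add a
  have h2 : HasFDerivAt φ (InnerProductSpace.toDual ℝ E (gradient φ (a + t • w)))
      (a + t • w) := (hφ (a + t • w)).hasGradientAt.hasFDerivAt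
  have h3 := h2.comp_hasDerivAt t h1
  simp only [Function.comp_def, InnerProductSpace.toDual_apply_apply] at h3
  exact h3

lemma grad_lower_bound (φ : E → ℝ) (hφ : Differentiable ℝ φ)
    (hmono : ∀ u v : E, 0 ≤ (inner ℝ (gradient φ u - gradient φ v) (u - v) : ℝ))
    (a b : E) : φ a + (inner ℝ (gradient φ a) (b - a) : ℝ) ≤ φ b := by
  set w := b - a with hw
  set f : ℝ → ℝ := fun t => φ (a + t • w) - t * (inner ℝ (gradient φ a) w : ℝ) with hf
  have hd : ∀ t : ℝ, HasDerivAt f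
      ((inner ℝ (gradient φ (a + t • w)) w : ℝ) - (inner ℝ (gradient φ a) w : ℝ)) t := by
    intro t
    have h1 : HasDerivAt (fun t : ℝ => t * (inner ℝ (gradient φ a) w : ℝ))
        (inner ℝ (gradient φ a) w : ℝ) t := by
      simpa using (hasDerivAt_id t).mul_const (inner ℝ (gradient φ a) w : ℝ)
    exact (line_hasDerivAt φ hφ a w t).sub h1
  have hmon : MonotoneOn f (Set.Icc (0:ℝ) 1) := by
    apply monotoneOn_of_deriv_nonneg (convex_Icc 0 1)
    · exact fun t _ => (hd t).continuousAt.continuousWithinAt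
    · exact fun t _ => (hd t).differentiableAt.differentiableWithinAt
    · intro t ht
      rw [interior_Icc] at ht
      rw [(hd t).deriv]
      have hkey := hmono (a + t • w) a
      have : (a + t • w) - a = t • w := by abel
      rw [this, real_inner_smul_right] at hkey
      have h2 : 0 ≤ (inner ℝ (gradient φ (a + t • w) - gradient φ a) w : ℝ) :=
        nonneg_of_mul_nonneg_right hkey ht.1
      rw [inner_sub_left] at h2
      linarith
  have h01 := hmon (Set.mem_Icc.2 ⟨le_refl 0, zero_le_one⟩)
      (Set.mem_Icc.2 ⟨zero_le_one, le_refl 1⟩) zero_le_one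
  simp only [hf, zero_smul, add_zero, zero_mul, sub_zero, one_smul, one_mul] at h01
  have : a + w = b := by rw [hw]; abel
  rw [this] at h01
  linarith

lemma grad_upper_bound (φ : E → ℝ) (hφ : Differentiable ℝ φ) (M : ℝ)
    (hlip : ∀ u v : E, ‖gradient φ u - gradient φ v‖ ≤ M * ‖u - v‖)
    (a b : E) :
    φ b ≤ φ a + (inner ℝ (gradient φ a) (b - a) : ℝ) + M / 2 * ‖b - a‖ ^ 2 := by
  set w := b - a with hw
  set f : ℝ → ℝ := fun t => φ (a + t • w) - t * (inner ℝ (gradient φ a) w : ℝ)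
      - M / 2 * t ^ 2 * ‖w‖ ^ 2 with hf
  have hd : ∀ t : ℝ, HasDerivAt f
      ((inner ℝ (gradient φ (a + t • w)) w : ℝ) - (inner ℝ (gradient φ a) w : ℝ)
        - M * t * ‖w‖ ^ 2) t := by
    intro t
    have h1 : HasDerivAt (fun t : ℝ => t * (inner ℝ (gradient φ a) w : ℝ))
        (inner ℝ (gradient φ a) w : ℝ) t := by
      simpa using (hasDerivAt_id t).mul_const (inner ℝ (gradient φ a) w : ℝ)
    have h2 : HasDerivAt (fun t : ℝ => M / 2 * t ^ 2 * ‖w‖ ^ 2)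
        (M * t * ‖w‖ ^ 2) t := by
      have := ((hasDerivAt_pow 2 t).const_mul (M / 2)).mul_const (‖w‖ ^ 2)
      refine this.congr_deriv ?_
      ring
    exact ((line_hasDerivAt φ hφ a w t).sub h1).sub h2
  have hmon : AntitoneOn f (Set.Icc (0:ℝ) 1) := by
    apply antitoneOn_of_deriv_nonpos (convex_Icc 0 1)
    · exact fun t _ => (hd t).continuousAt.continuousWithinAt
    · exact fun t _ => (hd t).differentiableAt.differentiableWithinAt
    · intro t ht
      rw [interior_Icc] at ht
      rw [(hd t).deriv]
      have hkey := hlip (a + t • w) a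
      have heq : (a + t • w) - a = t • w := by abel
      rw [heq, norm_smul, Real.norm_eq_abs, abs_of_pos ht.1] at hkey
      have hcs : (inner ℝ (gradient φ (a + t • w)) w : ℝ) - (inner ℝ (gradient φ a) w : ℝ)
          ≤ ‖gradient φ (a + t • w) - gradient φ a‖ * ‖w‖ := by
        rw [← inner_sub_left]
        exact real_inner_le_norm _ _
      have hnn : (0:ℝ) ≤ ‖w‖ := norm_nonneg _
      nlinarith [hkey, hcs, mul_le_mul_of_nonneg_right hkey hnn]
  have h01 := hmon (Set.mem_Icc.2 ⟨le_refl 0, zero_le_one⟩)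
      (Set.mem_Icc.2 ⟨zero_le_one, le_refl 1⟩) zero_le_one
  simp only [hf, zero_smul, add_zero, zero_mul, sub_zero, one_smul, one_mul, one_pow,
    mul_zero, ne_eq, OfNat.ofNat_ne_zero, not_false_eq_true, zero_pow] at h01
  have : a + w = b := by rw [hw]; abel
  rw [this] at h01
  linarith

lemma grad_cocoercive (φ : E → ℝ) (hφ : Differentiable ℝ φ) (M : ℝ) (hM : 0 < M)
    (hmono : ∀ u v : E, 0 ≤ (inner ℝ (gradient φ u - gradient φ v) (u - v) : ℝ))
    (hlip : ∀ u v : E, ‖gradient φ u - gradient φ v‖ ≤ M * ‖u - v‖)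
    (u v : E) :
    ‖gradient φ u - gradient φ v‖ ^ 2
      ≤ M * (inner ℝ (gradient φ u - gradient φ v) (u - v) : ℝ) := by
  -- one-sided strengthened lower bound
  have key : ∀ a b : E, φ a + (inner ℝ (gradient φ a) (b - a) : ℝ)
      + (1 / (2 * M)) * ‖gradient φ b - gradient φ a‖ ^ 2 ≤ φ b := by
    intro a b
    set D : E := gradient φ b - gradient φ a with hD
    set z : E := b - M⁻¹ • D with hz
    have h1 := grad_lower_bound φ hφ hmono a z
    have h2 := grad_upper_bound φ hφ M hlip b z
    -- expand
    have hzb : z - b = -(M⁻¹ • D) := by rw [hz]; abel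
    have hza : z - a = (b - a) - M⁻¹ • D := by rw [hz]; abel
    rw [hza] at h1
    rw [hzb] at h2
    rw [inner_sub_right, real_inner_smul_right] at h1
    rw [inner_neg_right, real_inner_smul_right, norm_neg, norm_smul, Real.norm_eq_abs,
      abs_of_pos (inv_pos.2 hM)] at h2
    have e1 : (inner ℝ (gradient φ b) D : ℝ) - (inner ℝ (gradient φ a) D : ℝ) = ‖D‖ ^ 2 := by
      rw [← inner_sub_left, ← hD, real_inner_self_eq_norm_sq]
    have hM' : M ≠ 0 := ne_of_gt hM
    have e2 : M / 2 * (M⁻¹ * ‖D‖) ^ 2 = (1 / (2 * M)) * ‖D‖ ^ 2 := by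
      field_simp
    rw [e2] at h2
    have := le_trans h1 h2
    have expand : (inner ℝ (gradient φ a) D : ℝ) - (inner ℝ (gradient φ b) D : ℝ)
        = -‖D‖ ^ 2 := by rw [← e1]; ring
    have hm2 : M⁻¹ * ((inner ℝ (gradient φ a) D : ℝ) - (inner ℝ (gradient φ b) D : ℝ))
        = M⁻¹ * (-‖D‖ ^ 2) := by rw [expand]
    have hq : M⁻¹ * ‖D‖ ^ 2 = 2 * (1 / (2 * M) * ‖D‖ ^ 2) := by field_simp
    nlinarith [this, hm2, hq]
  have h1 := key u v
  have h2 := key v u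
  have e3 : ‖gradient φ u - gradient φ v‖ = ‖gradient φ v - gradient φ u‖ := by
    rw [norm_sub_rev]
  have e4 : (inner ℝ (gradient φ u) (v - u) : ℝ) + (inner ℝ (gradient φ v) (u - v) : ℝ)
      = -(inner ℝ (gradient φ u - gradient φ v) (u - v) : ℝ) := by
    rw [inner_sub_left]
    have : (v - u : E) = -(u - v) := by abel
    rw [this, inner_neg_right]
    ring
  rw [← e3] at h1
  set N : ℝ := ‖gradient φ u - gradient φ v‖ ^ 2 with hN
  set I : ℝ := (inner ℝ (gradient φ u - gradient φ v) (u - v) : ℝ) with hI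
  have hsum : (1 / M) * N ≤ I := by
    have hq : 1 / (2 * M) * N + 1 / (2 * M) * N = (1 / M) * N := by field_simp; ring
    linarith
  calc N = M * ((1 / M) * N) := by field_simp
    _ ≤ M * I := mul_le_mul_of_nonneg_left hsum hM.le

lemma sq_le_imp {x y : ℝ} (hx : 0 ≤ x) (hy : 0 ≤ y) (h : x ^ 2 ≤ y ^ 2) : x ≤ y := by
  nlinarith

lemma arith_part {m M εg c₃ N A Y : ℝ}
    (hm : 0 < m) (hmM : m ≤ M) (hεg : 0 < εg) (hc₃ : 0 < c₃) (hN : 0 < N)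
    (F1 : m * N ^ 2 ≤ A + 2 * εg * N)
    (F2 : 2 * (1 + c₃) * εg * N ≤ A)
    (F3 : Y ^ 2 ≤ M * A + M * N * (2 * εg) + (2 * εg) ^ 2)
    (F4 : A ≤ M * N ^ 2 + 2 * εg * N) :
    ((1 + c₃) / (2 + c₃)) * m ≤ A / N ^ 2 ∧ Y ^ 2 / A ≤ (1 + 1 / c₃) * M := by
  have hM : 0 < M := lt_of_lt_of_le hm hmM
  have hApos : 0 < A := lt_of_lt_of_le (by positivity) F2
  constructor
  · rw [div_mul_eq_mul_div, div_le_div_iff₀ (by linarith) (by positivity)]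
    nlinarith [mul_le_mul_of_nonneg_left F1 (by linarith : (0:ℝ) ≤ 1 + c₃)]
  · rw [div_le_iff₀ hApos]
    have hεM : c₃ * (2 * εg) ≤ M * N := by
      have h1 : (c₃ * (2 * εg)) * N ≤ (M * N) * N := by nlinarith
      exact le_of_mul_le_mul_right h1 hN
    have key : c₃ * Y ^ 2 ≤ (c₃ + 1) * M * A := by
      have t1 : c₃ * (2 * εg) ^ 2 ≤ (M * N) * (2 * εg) := by nlinarith
      have t2 : (c₃ + 1) * (M * N * (2 * εg)) ≤ M * A := by
        have h3 : (1 + c₃) * (2 * εg * N) ≤ A := by nlinarith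
        nlinarith [mul_le_mul_of_nonneg_left h3 hM.le]
      nlinarith [mul_le_mul_of_nonneg_left F3 hc₃.le]
    have heq : (1 + 1 / c₃) * M * A = ((c₃ + 1) * M * A) / c₃ := by
      field_simp
    rw [heq, le_div_iff₀ hc₃]
    nlinarith [key]

/-- Corollary of Lemma 3.1 with `c = 2(1 + c₃)`, giving the guarantee (3.12) on all
curvature pairs produced by the algorithm. -/
theorem curvature_pair_bounds_for_algorithm
    {d : ℕ} (φ : EuclideanSpace ℝ (Fin d) → ℝ) (hφ : Differentiable ℝ φ)
    (m M : ℝ) (hm : 0 < m) (hmM : m ≤ M)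
    (hconv : ∀ u v : EuclideanSpace ℝ (Fin d),
      (inner ℝ (gradient φ u - gradient φ v) (u - v) : ℝ) ≥ m * ‖u - v‖ ^ 2)
    (hlip : ∀ u v : EuclideanSpace ℝ (Fin d),
      ‖gradient φ u - gradient φ v‖ ≤ M * ‖u - v‖)
    (g : EuclideanSpace ℝ (Fin d) → EuclideanSpace ℝ (Fin d))
    (εg : ℝ) (hεg : 0 < εg)
    (hg : ∀ x, ‖g x - gradient φ x‖ ≤ εg)
    (c₃ : ℝ) (hc₃ : 0 < c₃)
    (x s : EuclideanSpace ℝ (Fin d)) (hs : s ≠ 0)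
    (y : EuclideanSpace ℝ (Fin d)) (hy : y = g (x + s) - g x)
    (hnc : (inner ℝ s y : ℝ) ≥ 2 * (1 + c₃) * εg * ‖s‖) :
    (inner ℝ s y : ℝ) / (inner ℝ s s : ℝ) ≥ ((1 + c₃) / (2 + c₃)) * m ∧
      (inner ℝ y y : ℝ) / (inner ℝ s y : ℝ) ≤ (1 + 1 / c₃) * M := by
  have hM : 0 < M := lt_of_lt_of_le hm hmM
  have hM2 : (0:ℝ) < M / 2 := by linarith
  have hxs : (x + s) - x = s := by abel
  set yt : EuclideanSpace ℝ (Fin d) := gradient φ (x + s) - gradient φ x with hyt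
  -- error bound
  have he : ‖y - yt‖ ≤ 2 * εg := by
    have hediff : y - yt = (g (x + s) - gradient φ (x + s)) - (g x - gradient φ x) := by
      rw [hy, hyt]; abel
    rw [hediff]
    calc ‖(g (x + s) - gradient φ (x + s)) - (g x - gradient φ x)‖
        ≤ ‖g (x + s) - gradient φ (x + s)‖ + ‖g x - gradient φ x‖ := norm_sub_le _ _
      _ ≤ εg + εg := add_le_add (hg (x + s)) (hg x)
      _ = 2 * εg := by ring
  -- F1
  have hconv1 : (inner ℝ yt s : ℝ) ≥ m * ‖s‖ ^ 2 := by
    have h := hconv (x + s) x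
    rw [hxs] at h
    exact h
  have hsplit : (inner ℝ s y : ℝ) = (inner ℝ s yt : ℝ) + (inner ℝ s (y - yt) : ℝ) := by
    rw [← inner_add_right]
    congr 1
    abel
  have hcs1 : -(‖s‖ * (2 * εg)) ≤ (inner ℝ s (y - yt) : ℝ) := by
    have h1 := abs_real_inner_le_norm s (y - yt)
    have h2 : ‖s‖ * ‖y - yt‖ ≤ ‖s‖ * (2 * εg) :=
      mul_le_mul_of_nonneg_left he (norm_nonneg s)
    have h3 := neg_abs_le (inner ℝ s (y - yt) : ℝ)
    linarith
  have F1 : m * ‖s‖ ^ 2 ≤ (inner ℝ s y : ℝ) + 2 * εg * ‖s‖ := by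
    have hsym : (inner ℝ s yt : ℝ) = (inner ℝ yt s : ℝ) := real_inner_comm _ _
    linarith [hconv1, hcs1, hsplit.ge, hsplit.le]
  -- cocoercivity
  have hmono : ∀ u v : EuclideanSpace ℝ (Fin d),
      0 ≤ (inner ℝ (gradient φ u - gradient φ v) (u - v) : ℝ) := fun u v =>
    le_trans (by positivity) (hconv u v)
  have hcoco : ‖yt‖ ^ 2 ≤ M * (inner ℝ yt s : ℝ) := by
    have h := grad_cocoercive φ hφ M hM hmono hlip (x + s) x
    rw [hxs] at h
    exact h
  -- ball membership
  have hball : ‖yt - (M / 2) • s‖ ≤ (M / 2) * ‖s‖ := by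
    apply sq_le_imp (norm_nonneg _) (by positivity)
    have hexp : ‖yt - (M / 2) • s‖ ^ 2
        = ‖yt‖ ^ 2 - M * (inner ℝ yt s : ℝ) + ((M / 2) * ‖s‖) ^ 2 := by
      rw [norm_sub_sq_real, real_inner_smul_right, norm_smul, Real.norm_eq_abs,
        abs_of_pos hM2]
      ring
    rw [hexp]
    linarith [hcoco]
  have hball2 : ‖y - (M / 2) • s‖ ≤ (M / 2) * ‖s‖ + 2 * εg := by
    have hsplit2 : y - (M / 2) • s = (yt - (M / 2) • s) + (y - yt) := by abel
    rw [hsplit2]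
    exact le_trans (norm_add_le _ _) (add_le_add hball he)
  -- F3
  have F3 : ‖y‖ ^ 2 ≤ M * (inner ℝ s y : ℝ) + M * ‖s‖ * (2 * εg) + (2 * εg) ^ 2 := by
    have hsq : ‖y - (M / 2) • s‖ ^ 2 ≤ ((M / 2) * ‖s‖ + 2 * εg) ^ 2 :=
      pow_le_pow_left₀ (norm_nonneg _) hball2 2
    have hexp : ‖y - (M / 2) • s‖ ^ 2
        = ‖y‖ ^ 2 - M * (inner ℝ y s : ℝ) + ((M / 2) * ‖s‖) ^ 2 := by
      rw [norm_sub_sq_real, real_inner_smul_right, norm_smul, Real.norm_eq_abs,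
        abs_of_pos hM2]
      ring
    have hsym : (inner ℝ y s : ℝ) = (inner ℝ s y : ℝ) := real_inner_comm _ _
    rw [hexp, hsym] at hsq
    nlinarith [hsq]
  -- F4
  have F4 : (inner ℝ s y : ℝ) ≤ M * ‖s‖ ^ 2 + 2 * εg * ‖s‖ := by
    have h1 : (inner ℝ s (y - (M / 2) • s) : ℝ) ≤ ‖s‖ * ((M / 2) * ‖s‖ + 2 * εg) := by
      calc (inner ℝ s (y - (M / 2) • s) : ℝ) ≤ ‖s‖ * ‖y - (M / 2) • s‖ :=
            real_inner_le_norm _ _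
        _ ≤ ‖s‖ * ((M / 2) * ‖s‖ + 2 * εg) :=
            mul_le_mul_of_nonneg_left hball2 (norm_nonneg s)
    rw [inner_sub_right, real_inner_smul_right, real_inner_self_eq_norm_sq] at h1
    nlinarith [h1]
  -- finish with pure arithmetic
  have hnpos : (0:ℝ) < ‖s‖ := norm_pos_iff.2 hs
  have main := arith_part hm hmM hεg hc₃ hnpos F1 hnc F3 F4
  rw [real_inner_self_eq_norm_sq, real_inner_self_eq_norm_sq]
  exact ⟨main.1, main.2⟩
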